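/- With the lattice-sum notation: suppose n_+ < 0 and n_− ≥ 0. If n_+ ≤ (2N_+ − N_{d−1})/(2p−d−2), then P_N(n) = Π_{a ∈ I} [e_a·(N + n − n𝒜), e_a·n]⁺_q = 0. Equivalently, nonvanishing of P_N(n) with n_+ < 0 ≤ n_− forces (2p−d−2)·n_+ > 2N_+ − N_{d−1}. -/

import Mathlib

noncomputable section
open LaurentPolynomial

def gaussRec (v : LaurentPolynomial ℤ) : ℕ → ℕ → LaurentPolynomial ℤ
  | 0, 0 => 1
  | 0, _ + 1 => 0
  | _ + 1, 0 => 1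
  | n + 1, m + 1 => gaussRec v n (m + 1) * v ^ (m + 1) + gaussRec v n m

/-- `[n m]_v` for integer indices: the Gaussian binomial in the variable `v`,
zero unless `0 ≤ m ≤ n`. -/
def gaussZ (v : LaurentPolynomial ℤ) (n m : ℤ) : LaurentPolynomial ℤ :=
  if 0 ≤ m ∧ m ≤ n then gaussRec v n.toNat m.toNat else 0

/-- The Gaussian binomial coefficient `[n m]_q` as a Laurent polynomial in `q = T 1`. -/
def qbin (n m : ℤ) : LaurentPolynomial ℤ := gaussZ (T 1) n m

/-- The extended q-binomial coefficient `[n m]⁺_q ∈ ℤ[q,q⁻¹]`. -/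
def qbinPlus (n m : ℤ) : LaurentPolynomial ℤ :=
  if 0 ≤ n then qbin n m
  else (-1) ^ (n - m).natAbs * T (-(((n - m) ^ 2 + (n - m)) / 2)) *
    gaussZ (T (-1)) (-m - 1) (-n - 1)


/-- The symmetric `(d+2) × (d+2)` matrix `𝒜`, with indices `0 ↦ +`, `1 ↦ −`,
`i+2 ↦ i` for `0 ≤ i ≤ d-1`. -/
def Amat (p d : ℕ) : Matrix (Fin (d + 2)) (Fin (d + 2)) ℤ := fun i j =>
  if (i : ℕ) = 0 ∧ (j : ℕ) = 0 then (p : ℤ)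
  else if (i : ℕ) = 1 ∧ (j : ℕ) = 1 then (p : ℤ)
  else if ((i : ℕ) = 0 ∧ (j : ℕ) = 1) ∨ ((i : ℕ) = 1 ∧ (j : ℕ) = 0) then -(p : ℤ) + d + 1
  else if (i : ℕ) ≤ 1 then (j : ℤ) - 1
  else if (j : ℕ) ≤ 1 then (i : ℤ) - 1
  else 2 * min ((i : ℤ) - 1) ((j : ℤ) - 1)

/-- The tridiagonal matrix `T_m` with diagonal `(2, ..., 2, 1)` and `-1` on the
off-diagonals, so that `(T_m⁻¹)_{ij} = min(i,j)`. -/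
def Tmat (m : ℕ) : Matrix (Fin m) (Fin m) ℤ := fun i j =>
  if i = j then (if (i : ℕ) = m - 1 then 1 else 2)
  else if (i : ℕ) + 1 = (j : ℕ) ∨ (j : ℕ) + 1 = (i : ℕ) then -1 else 0

/-- `N' = (N_0, ..., N_{d-1}, N_+ + N_-)`. -/
def Nprime (d : ℕ) (N : Fin (d + 2) → ℤ) : Fin (d + 1) → ℤ := fun i =>
  if h : (i : ℕ) < d then N ⟨(i : ℕ) + 2, by omega⟩ else N 0 + N 1

/-- `L = N' T_{d+1}` (as a row vector times the matrix); `Lvec d N j` is `L_{j+1}`. -/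
def Lvec (d : ℕ) (N : Fin (d + 2) → ℤ) : Fin (d + 1) → ℤ := fun j =>
  ∑ i, Nprime d N i * Tmat (d + 1) i j

/-- `(n𝒜)_a = Σ_j n_j 𝒜_{ja}`. -/
def rowA (p d : ℕ) (n : Fin (d + 2) → ℤ) (a : Fin (d + 2)) : ℤ :=
  ∑ j, n j * Amat p d j a

/-- `P_N(n) = Π_{a ∈ I} [e_a·(N + n − n𝒜), e_a·n]⁺_q`. -/
def Pfun (p d : ℕ) (N n : Fin (d + 2) → ℤ) : LaurentPolynomial ℤ :=
  ∏ a, qbinPlus (N a + n a - rowA p d n a) (n a)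


lemma qbinPlus_eq_zero_of_lt {A m : ℤ} (h : A < m) : qbinPlus A m = 0 := by
  unfold qbinPlus qbin gaussZ
  by_cases hA : 0 ≤ A
  · rw [if_pos hA, if_neg (by omega)]
  · rw [if_neg hA, if_neg (by omega), mul_zero]

lemma qbinPlus_eq_zero_of_neg {A m : ℤ} (hA : 0 ≤ A) (hm : m < 0) : qbinPlus A m = 0 := by
  unfold qbinPlus qbin gaussZ
  rw [if_pos hA, if_neg (by omega)]

lemma key_identity (p d : ℕ) (hd1 : 1 ≤ d) (n : Fin (d + 2) → ℤ) (h : d + 1 < d + 2) :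
    2 * rowA p d n 0 - rowA p d n ⟨d + 1, h⟩ =
      (2 * (p : ℤ) - d - 2) * n 0 + 2 * n 0 - (2 * (p : ℤ) - d - 2) * n 1 := by
  unfold rowA
  rw [Finset.mul_sum, ← Finset.sum_sub_distrib]
  have hA00 : Amat p d 0 0 = (p : ℤ) := by simp [Amat]
  have hA10 : Amat p d 1 0 = -(p : ℤ) + d + 1 := by simp [Amat]
  have hA0L : Amat p d 0 ⟨d + 1, h⟩ = (d : ℤ) := by
    simp [Amat]
    omega
  have hA1L : Amat p d 1 ⟨d + 1, h⟩ = (d : ℤ) := by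
    simp [Amat]
    omega
  have htail : ∀ j : Fin d, Amat p d j.succ.succ 0 = (j : ℤ) + 1 ∧
      Amat p d j.succ.succ ⟨d + 1, h⟩ = 2 * ((j : ℤ) + 1) := by
    intro j
    constructor
    · simp [Amat]
    · have hj : (j : ℤ) + 1 ≤ (d : ℤ) := by exact_mod_cast j.isLt
      simp [Amat]
      intro hd0
      omega
  rw [Fin.sum_univ_succ, Fin.sum_univ_succ]
  have h2 : ∀ j : Fin d,
      (2 * (n j.succ.succ * Amat p d j.succ.succ 0) -
        n j.succ.succ * Amat p d j.succ.succ ⟨d + 1, h⟩) = 0 := by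
    intro j
    rw [(htail j).1, (htail j).2]
    ring
  rw [Finset.sum_congr rfl (fun j _ => h2 j), Finset.sum_const_zero]
  show 2 * (n 0 * Amat p d 0 0) - n 0 * Amat p d 0 ⟨d + 1, h⟩ +
      (2 * (n 1 * Amat p d 1 0) - n 1 * Amat p d 1 ⟨d + 1, h⟩ + 0) = _
  rw [hA00, hA10, hA0L, hA1L]
  ring

/-- if `n_+ < 0 ≤ n_-` and `(2p-d-2) n_+ ≤ 2N_+ - N_{d-1}`
(i.e. `n_+ ≤ (2N_+ - N_{d-1})/(2p-d-2)`), then `P_N(n) = 0`. -/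
theorem Pfun_vanish_plus_neg (p d : ℕ) (hp : 2 ≤ p) (hd : d < 2 * p - 2) (hd1 : 1 ≤ d)
    (N n : Fin (d + 2) → ℤ)
    (hnp : n 0 < 0) (hnm : 0 ≤ n 1)
    (hC : (2 * (p : ℤ) - d - 2) * n 0 ≤ 2 * N 0 - N ⟨d + 1, by omega⟩) :
    Pfun p d N n = 0 := by
  unfold Pfun
  have hlt : (0 : ℤ) < 2 * (p : ℤ) - d - 2 := by omega
  rcases lt_or_ge (N 0 + n 0 - rowA p d n 0) 0 with h0 | h0
  · have hh : d + 1 < d + 2 := by omega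
    have key := key_identity p d hd1 n hh
    have hC' : (2 * (p : ℤ) - d - 2) * n 0 ≤ 2 * N 0 - N ⟨d + 1, hh⟩ := hC
    have h1 : 0 ≤ (2 * (p : ℤ) - d - 2) * n 1 := mul_nonneg (le_of_lt hlt) hnm
    have hlast : N ⟨d + 1, hh⟩ + n ⟨d + 1, hh⟩ - rowA p d n ⟨d + 1, hh⟩ < n ⟨d + 1, hh⟩ := by
      by_contra hcon
      push_neg at hcon
      linarith
    exact Finset.prod_eq_zero (Finset.mem_univ _) (qbinPlus_eq_zero_of_lt hlast)
  · exact Finset.prod_eq_zero (Finset.mem_univ 0) (qbinPlus_eq_zero_of_neg h0 hnp)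


end
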